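/- Let H be a separable infinite-dimensional complex Hilbert space, M a nontrivial closed subspace of H, and (T_n)_{n≥1} a sequence of bounded linear operators on H. Suppose there exist subsets X and Y, both dense in M, and a strictly increasing sequence (n_k)_{k≥1} of positive integers such that: (i) T_{n_k} x → 0 as k → ∞ for all x ∈ X; (ii) for every y ∈ Y there exist a sequence (x_k) in M and α ∈ ℂ with 0 < |α| ≤ 1 such that x_k → 0 and α • T_{n_k} x_k → y; (iii) T_{n_k}(M) ⊆ M for each k ∈ ℕ. Then (T_n) is subspace-disk topologically transitive with respect to M, and hence (T_n) is subspace-diskcyclic with respect to M. -/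

import Mathlib

open Pointwise Filter Topology

/-- A subset `S` of a Hilbert space is relatively open in the subspace `M`. -/
def RelOpenIn {H : Type*} [NormedAddCommGroup H] [InnerProductSpace ℂ H]
    (M : Submodule ℂ H) (S : Set H) : Prop :=
  IsOpen ((↑) ⁻¹' S : Set ↥M)

/-- `(T n)` is subspace-disk topologically transitive with respect to `M`. -/
def SubspaceDiskTransitive {H : Type*} [NormedAddCommGroup H] [InnerProductSpace ℂ H]
    (T : ℕ → H →L[ℂ] H) (M : Submodule ℂ H) : Prop :=
  ∀ U V : Set H, U ⊆ M → V ⊆ M → U.Nonempty → V.Nonempty →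
    RelOpenIn M U → RelOpenIn M V →
    ∃ (n : ℕ) (α : ℂ), 1 ≤ ‖α‖ ∧
      ∃ W : Set H, W ⊆ M ∧ W.Nonempty ∧ RelOpenIn M W ∧ W ⊆ (T n) ⁻¹' (α • U) ∩ V

/-- `(T n)` is subspace-diskcyclic with respect to `M`. -/
def SubspaceDiskcyclic {H : Type*} [NormedAddCommGroup H] [InnerProductSpace ℂ H]
    (T : ℕ → H →L[ℂ] H) (M : Submodule ℂ H) : Prop :=
  ∃ x : H, (M : Set H) ⊆
    closure ({y : H | ∃ (n : ℕ) (α : ℂ), 0 < ‖α‖ ∧ ‖α‖ ≤ 1 ∧ y = α • T n x} ∩ M)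

/-- Key step: from the criterion hypotheses, any two nonempty relatively open sets can be
connected by some `T (nseq k)` and a disk scalar. -/
lemma key_step
    {H : Type*} [NormedAddCommGroup H] [InnerProductSpace ℂ H]
    (M : Submodule ℂ H)
    (T : ℕ → H →L[ℂ] H) (X Y : Set H) (hXM : X ⊆ M) (hYM : Y ⊆ M)
    (hX : (M : Set H) ⊆ closure X) (hY : (M : Set H) ⊆ closure Y)
    (nseq : ℕ → ℕ)
    (h1 : ∀ x ∈ X, Tendsto (fun k => T (nseq k) x) atTop (nhds 0))
    (h2 : ∀ y ∈ Y, ∃ (u : ℕ → H) (α : ℂ), 0 < ‖α‖ ∧ ‖α‖ ≤ 1 ∧ (∀ k, u k ∈ M) ∧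
      Tendsto u atTop (nhds 0) ∧
      Tendsto (fun k => α • T (nseq k) (u k)) atTop (nhds y))
    (h3 : ∀ k, (T (nseq k)) '' M ⊆ M)
    (U V : Set H) (hUM : U ⊆ M) (hVM : V ⊆ M) (hUne : U.Nonempty) (hVne : V.Nonempty)
    (hUo : RelOpenIn M U) (hVo : RelOpenIn M V) :
    ∃ (k : ℕ) (α : ℂ), 0 < ‖α‖ ∧ ‖α‖ ≤ 1 ∧
      ∃ x, x ∈ M ∧ x ∈ V ∧ α • T (nseq k) x ∈ U := by
  -- a point of `Y` inside `U`
  obtain ⟨y₀, hy₀⟩ := hUne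
  have hy₀M : y₀ ∈ M := hUM hy₀
  obtain ⟨ε₁, hε₁, hb₁⟩ := Metric.isOpen_iff.mp hUo ⟨y₀, hy₀M⟩ hy₀
  obtain ⟨y, hyY, hyd⟩ := Metric.mem_closure_iff.mp (hY hy₀M) ε₁ hε₁
  have hyM : y ∈ M := hYM hyY
  have hyU : y ∈ U := by
    have : (⟨y, hyM⟩ : ↥M) ∈ Metric.ball (⟨y₀, hy₀M⟩ : ↥M) ε₁ := by
      simp only [Metric.mem_ball, Subtype.dist_eq]
      rwa [dist_comm]
    exact hb₁ this
  obtain ⟨ε₂, hε₂, hb₂⟩ := Metric.isOpen_iff.mp hUo ⟨y, hyM⟩ hyU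
  -- a point of `X` inside `V`
  obtain ⟨x₀, hx₀⟩ := hVne
  have hx₀M : x₀ ∈ M := hVM hx₀
  obtain ⟨ε₃, hε₃, hb₃⟩ := Metric.isOpen_iff.mp hVo ⟨x₀, hx₀M⟩ hx₀
  obtain ⟨x, hxX, hxd⟩ := Metric.mem_closure_iff.mp (hX hx₀M) ε₃ hε₃
  have hxM : x ∈ M := hXM hxX
  have hxV : x ∈ V := by
    have : (⟨x, hxM⟩ : ↥M) ∈ Metric.ball (⟨x₀, hx₀M⟩ : ↥M) ε₃ := by
      simp only [Metric.mem_ball, Subtype.dist_eq]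
      rwa [dist_comm]
    exact hb₃ this
  obtain ⟨ε₄, hε₄, hb₄⟩ := Metric.isOpen_iff.mp hVo ⟨x, hxM⟩ hxV
  -- the criterion sequences
  obtain ⟨u, α, hα, hα1, huM, hu0, huy⟩ := h2 y hyY
  set z : ℕ → H := fun k => x + u k with hz
  have hzM : ∀ k, z k ∈ M := fun k => M.add_mem hxM (huM k)
  have htz : Tendsto z atTop (nhds x) := by
    have := tendsto_const_nhds.add hu0 (f := fun _ : ℕ => x) (x := atTop)
    simpa using this
  have hTz : Tendsto (fun k => α • T (nseq k) (z k)) atTop (nhds y) := by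
    have := ((h1 x hxX).const_smul α).add huy
    simp only [smul_zero, zero_add] at this
    convert this using 2 with k
    simp [hz, map_add, smul_add]
  have hA : ∀ᶠ k in atTop, dist (z k) x < ε₄ :=
    (Metric.tendsto_nhds.mp htz) ε₄ hε₄
  have hB : ∀ᶠ k in atTop, dist (α • T (nseq k) (z k)) y < ε₂ :=
    (Metric.tendsto_nhds.mp hTz) ε₂ hε₂
  obtain ⟨k, hkA, hkB⟩ := (hA.and hB).exists
  refine ⟨k, α, hα, hα1, z k, hzM k, ?_, ?_⟩
  · refine hb₄ (show (⟨z k, hzM k⟩ : ↥M) ∈ Metric.ball (⟨x, hxM⟩ : ↥M) ε₄ from ?_)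
    simpa [Metric.mem_ball, Subtype.dist_eq] using hkA
  · have hmem : α • T (nseq k) (z k) ∈ M :=
      M.smul_mem α (h3 k (Set.mem_image_of_mem _ (hzM k)))
    exact hb₂ (show (⟨_, hmem⟩ : ↥M) ∈ Metric.ball (⟨y, hyM⟩ : ↥M) ε₂ by
      simpa [Metric.mem_ball, Subtype.dist_eq] using hkB)

/-- a subspace-diskcyclicity criterion. -/
theorem subspaceDiskTransitive_of_criterion
    {H : Type*} [NormedAddCommGroup H] [InnerProductSpace ℂ H] [CompleteSpace H]
    [TopologicalSpace.SeparableSpace H] (hinf : ¬ FiniteDimensional ℂ H)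
    (M : Submodule ℂ H) (hMc : IsClosed (M : Set H)) (hM₁ : M ≠ ⊥) (hM₂ : M ≠ ⊤)
    (T : ℕ → H →L[ℂ] H) (X Y : Set H) (hXM : X ⊆ M) (hYM : Y ⊆ M)
    (hX : (M : Set H) ⊆ closure X) (hY : (M : Set H) ⊆ closure Y)
    (nseq : ℕ → ℕ) (hmono : StrictMono nseq) (hpos : ∀ k, 0 < nseq k)
    (h1 : ∀ x ∈ X, Tendsto (fun k => T (nseq k) x) atTop (nhds 0))
    (h2 : ∀ y ∈ Y, ∃ (u : ℕ → H) (α : ℂ), 0 < ‖α‖ ∧ ‖α‖ ≤ 1 ∧ (∀ k, u k ∈ M) ∧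
      Tendsto u atTop (nhds 0) ∧
      Tendsto (fun k => α • T (nseq k) (u k)) atTop (nhds y))
    (h3 : ∀ k, (T (nseq k)) '' M ⊆ M) :
    SubspaceDiskTransitive T M ∧ SubspaceDiskcyclic T M := by
  have key := key_step M T X Y hXM hYM hX hY nseq h1 h2 h3
  -- the `M`-endomorphisms induced by `T (nseq k)`
  set S : ℕ → ↥M → ↥M := fun k m => ⟨T (nseq k) ↑m, h3 k (Set.mem_image_of_mem _ m.2)⟩ with hS
  have hScont : ∀ k, Continuous (S k) := fun k =>
    Continuous.subtype_mk ((T (nseq k)).continuous.comp continuous_subtype_val) _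
  constructor
  · -- transitivity
    intro U V hUM hVM hUne hVne hUo hVo
    obtain ⟨k, α, hα, hα1, z, hzM, hzV, hzU⟩ := key U V hUM hVM hUne hVne hUo hVo
    have hα0 : α ≠ 0 := by simpa using hα.ne'
    refine ⟨nseq k, α⁻¹, ?_, ?_⟩
    · rw [norm_inv]
      exact (one_le_inv₀ hα).mpr hα1
    · set W' : Set ↥M := (fun m : ↥M => α • S k m) ⁻¹' (((↑) : ↥M → H) ⁻¹' U) ∩
        (((↑) : ↥M → H) ⁻¹' V) with hW'
      refine ⟨Subtype.val '' W', ?_, ?_, ?_, ?_⟩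
      · rintro w ⟨m, _, rfl⟩; exact m.2
      · refine ⟨z, ⟨z, hzM⟩, ⟨?_, hzV⟩, rfl⟩
        simpa [hS] using hzU
      · unfold RelOpenIn
        rw [Set.preimage_image_eq _ Subtype.val_injective]
        exact ((hUo.preimage ((hScont k).const_smul α : Continuous fun m : ↥M => α • S k m)).inter hVo)
      · rintro w ⟨m, ⟨hmU, hmV⟩, rfl⟩
        refine ⟨?_, hmV⟩
        simp only [Set.mem_preimage]
        rw [Set.mem_smul_set_iff_inv_smul_mem₀ (by simpa using hα0), inv_inv]
        simpa [hS] using hmU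
  · -- diskcyclicity via Baire category in `↥M`
    haveI : CompleteSpace ↥M := hMc.completeSpace_coe
    haveI : SecondCountableTopology H :=
      UniformSpace.secondCountable_of_separable H
    haveI : BaireSpace ↥M := BaireSpace.of_completelyPseudoMetrizable
    obtain ⟨b, hbc, hbne, hbasis⟩ := TopologicalSpace.exists_countable_basis ↥M
    set G : Set ↥M → Set ↥M := fun s =>
      {m : ↥M | ∃ (k : ℕ) (α : ℂ), 0 < ‖α‖ ∧ ‖α‖ ≤ 1 ∧ α • S k m ∈ s} with hG
    have hGopen : ∀ s ∈ b, IsOpen (G s) := by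
      intro s hs
      have : G s = ⋃ (k : ℕ) (α : ℂ) (_ : 0 < ‖α‖ ∧ ‖α‖ ≤ 1),
          (fun m : ↥M => α • S k m) ⁻¹' s := by
        ext m
        simp only [hG, Set.mem_setOf_eq, Set.mem_iUnion, Set.mem_preimage]
        constructor
        · rintro ⟨k, α, h₁, h₂, h₃⟩; exact ⟨k, α, ⟨h₁, h₂⟩, h₃⟩
        · rintro ⟨k, α, ⟨h₁, h₂⟩, h₃⟩; exact ⟨k, α, h₁, h₂, h₃⟩
      rw [this]
      exact isOpen_iUnion fun k => isOpen_iUnion fun α => isOpen_iUnion fun _ =>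
        (hbasis.isOpen hs).preimage ((hScont k).const_smul α : Continuous fun m : ↥M => α • S k m)
    have hGdense : ∀ s ∈ b, Dense (G s) := by
      intro s hs
      rw [dense_iff_inter_open]
      intro Uo hUo hUone
      have hsne : s.Nonempty := Set.nonempty_iff_ne_empty.mpr (fun h => hbne (h ▸ hs))
      have h1' : RelOpenIn M (Subtype.val '' s) := by
        unfold RelOpenIn
        rw [Set.preimage_image_eq _ Subtype.val_injective]
        exact hbasis.isOpen hs
      have h2' : RelOpenIn M (Subtype.val '' Uo) := by
        unfold RelOpenIn
        rw [Set.preimage_image_eq _ Subtype.val_injective]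
        exact hUo
      obtain ⟨k, α, hα, hα1, x, hxM, hxV, hxU⟩ :=
        key (Subtype.val '' s) (Subtype.val '' Uo)
          (by rintro w ⟨m, _, rfl⟩; exact m.2) (by rintro w ⟨m, _, rfl⟩; exact m.2)
          (hsne.image _) (hUone.image _) h1' h2'
      obtain ⟨m, hmUo, hmx⟩ := hxV
      refine ⟨m, hmUo, k, α, hα, hα1, ?_⟩
      obtain ⟨t, hts, htx⟩ := hxU
      have : t = α • S k m := by
        apply Subtype.val_injective
        rw [htx]
        simp [hS, hmx]
      rwa [this] at hts
    have hdense : Dense (⋂ s ∈ b, G s) := dense_biInter_of_isOpen hGopen hbc hGdense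
    obtain ⟨x, hx⟩ := hdense.nonempty
    simp only [Set.mem_iInter] at hx
    refine ⟨(x : H), ?_⟩
    intro m hm
    rw [Metric.mem_closure_iff]
    intro ε hε
    obtain ⟨s, hsb, hms, hsball⟩ := hbasis.exists_subset_of_mem_open
      (Metric.mem_ball_self hε (x := (⟨m, hm⟩ : ↥M))) Metric.isOpen_ball
    obtain ⟨k, α, hα, hα1, hmem⟩ := hx s hsb
    refine ⟨(α • S k x : ↥M), ⟨⟨nseq k, α, hα, hα1, ?_⟩, (α • S k x : ↥M).2⟩, ?_⟩
    · simp [hS]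
    · have := hsball hmem
      rw [Metric.mem_ball, Subtype.dist_eq] at this
      rw [dist_comm]
      exact this
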